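/- arXiv:1604.06931 — 2 statements merged into one kernel-verified Lean document; each statement's English description precedes it below -/
import Mathlib

section
/- Let n ≥ 3 and let C_n be the cycle graph on n vertices. For every k with 2 ≤ k ≤ n, the number of (n−k)-dimensional faces of the graphical zonotope Z_{C_n} equals (2^k − 2)·binomial(n,k). -/
open Polynomial

/-- The graphical zonotope of `G`, as the Minkowski sum over the edges `{i,j}` of `G`
of the segments `[-(e_i - e_j), e_i - e_j]`, described via antisymmetric coefficient
functions supported on edges. -/
def graphicalZonotope {V : Type} [Fintype V] [DecidableEq V] (G : SimpleGraph V) :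
    Set (V → ℝ) :=
  { x | ∃ c : V → V → ℝ, (∀ u v, c u v = - c v u) ∧ (∀ u v, ¬ G.Adj u v → c u v = 0) ∧
      (∀ u v, |c u v| ≤ 1) ∧ x = fun w => ∑ u, c w u }

/-- `faceCount G k` is the number of nonempty exposed faces of the graphical zonotope of `G`
whose affine span has dimension `k`. -/
noncomputable def faceCount {V : Type} [Fintype V] [DecidableEq V] (G : SimpleGraph V)
    (k : ℕ) : ℕ :=
  Nat.card { F : Set (V → ℝ) // F.Nonempty ∧ IsExposed ℝ (graphicalZonotope G) F ∧
      Module.finrank ℝ (affineSpan ℝ F).direction = k }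

/-- The number of acyclic orientations of `G`. -/
noncomputable def acyclicOrientationCount {V : Type} (G : SimpleGraph V) : ℕ :=
  Nat.card { r : V → V → Prop // (∀ u v, r u v → G.Adj u v) ∧
      (∀ u v, G.Adj u v → Xor' (r u v) (r v u)) ∧ (∀ v, ¬ Relation.TransGen r v v) }

/-- rank of the induced subgraph on `s` : `|s| - #components`. -/
noncomputable def inducedRank {V : Type} (G : SimpleGraph V) (s : Set V) : ℕ :=
  Nat.card s - Nat.card (G.induce s).ConnectedComponent

/-- The `q`-analog of the chromatic polynomial evaluated at `d` colors, an element of `ℤ[q]`. -/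
noncomputable def chromQ {V : Type} [Fintype V] [DecidableEq V] (G : SimpleGraph V) (d : ℕ) : Polynomial ℤ :=
  ∑ f : V → Fin d, (X : Polynomial ℤ) ^ (∑ i : Fin d, inducedRank G (f ⁻¹' {i}))

/-- `H` is (the spanning subgraph determined by) a flat of `G`. -/
def IsFlatOf {V : Type} (G H : SimpleGraph V) : Prop :=
  H ≤ G ∧ ∀ u v, G.Adj u v → H.Reachable u v → H.Adj u v

/-- The rank of a spanning subgraph `H`: `|V| - c(H)`. -/
noncomputable def flatRank {V : Type} [Fintype V] (H : SimpleGraph V) : ℕ :=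
  Fintype.card V - Nat.card H.ConnectedComponent

/-- The contraction `G/H`: vertices are the connected components of `H`, two distinct
components being adjacent iff some edge of `G` joins them. -/
def contractFlat {V : Type} (G H : SimpleGraph V) : SimpleGraph H.ConnectedComponent where
  Adj C D := C ≠ D ∧ ∃ u v, G.Adj u v ∧ H.connectedComponentMk u = C ∧
      H.connectedComponentMk v = D
  symm := by
    constructor
    rintro C D ⟨hne, u, v, hadj, hu, hv⟩
    exact ⟨hne.symm, v, u, hadj.symm, hv, hu⟩
  loopless := by constructor; rintro C ⟨hne, -⟩; exact hne rfl


namespace CycleZono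
open Finset
open scoped Fin.NatCast Fin.CommRing

variable {n : ℕ} [NeZero n]

def D (b : Fin n → ℝ) : Fin n → ℝ := fun w => b (w - 1) - b w

def Zset (n : ℕ) [NeZero n] : Set (Fin n → ℝ) :=
  {x | ∃ b : Fin n → ℝ, (∀ w, |b w| ≤ 1) ∧ x = D b}

def Fface (σ : Fin n → SignType) : Set (Fin n → ℝ) :=
  {x | ∃ b : Fin n → ℝ, (∀ w, |b w| ≤ 1) ∧ (∀ w, σ w ≠ 0 → b w = (σ w : ℝ)) ∧ x = D b}

def Mixed (σ : Fin n → SignType) : Prop := (∃ w, σ w = 1) ∧ (∃ w, σ w = -1)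

def pt (σ : Fin n → SignType) : Fin n → ℝ := fun w => (σ w : ℝ)

def del (a : Fin n → ℝ) : Fin n → ℝ := fun w => a (w + 1) - a w

lemma two_ne (hn : 3 ≤ n) : (2 : Fin n) ≠ 0 := by
  intro h
  have h2 : ((2:ℕ) : Fin n) = 0 := by exact_mod_cast h
  rw [Fin.natCast_eq_zero] at h2
  exact absurd (Nat.le_of_dvd (by norm_num) h2) (by omega)

lemma sub_one_ne_add_one (hn : 3 ≤ n) (w : Fin n) : w - 1 ≠ w + 1 := by
  intro h
  have h2 : (2 : Fin n) = 0 := by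
    have : (w + 1) - (w - 1) = (2 : Fin n) := by ring
    rw [← this, h, sub_self]
  exact two_ne hn h2

lemma abs_cast_le_one (s : SignType) : |(s : ℝ)| ≤ 1 := by cases s <;> norm_num

lemma cast_inj_sign {s t : SignType} (h : (s : ℝ) = t) : s = t := by
  cases s <;> cases t <;> first | rfl | (norm_num at h)

lemma adj_iff (hn : 3 ≤ n) {u v : Fin n} :
    (SimpleGraph.cycleGraph n).Adj u v ↔ u = v + 1 ∨ v = u + 1 := by
  rw [SimpleGraph.cycleGraph_adj']
  have h1 : (1 : Fin n).val = 1 := by rw [Fin.val_one', Nat.mod_eq_of_lt (by omega)]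
  constructor
  · rintro (h | h)
    · left; have : u - v = 1 := by rw [Fin.ext_iff, h1]; exact h
      rw [← this]; ring
    · right; have : v - u = 1 := by rw [Fin.ext_iff, h1]; exact h
      rw [← this]; ring
  · rintro (h | h)
    · left; rw [h, show v + 1 - v = 1 by ring]; exact h1
    · right; rw [h, show u + 1 - u = 1 by ring]; exact h1

lemma zono_eq (hn : 3 ≤ n) :
    graphicalZonotope (SimpleGraph.cycleGraph n) = Zset n := by
  have hne : ∀ w : Fin n, w - 1 ≠ w + 1 := sub_one_ne_add_one hn
  ext x
  constructor
  · rintro ⟨c, hanti, hsupp, hbd, rfl⟩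
    refine ⟨fun w => c (w + 1) w, fun w => hbd _ _, ?_⟩
    funext w
    have hterm : ∀ u ∈ univ, u ≠ w - 1 ∧ u ≠ w + 1 → c w u = 0 := by
      rintro u _ ⟨h1, h2⟩
      apply hsupp
      rw [adj_iff hn]
      rintro (h | h)
      · exact h1 (by rw [h]; ring)
      · exact h2 h
    rw [Finset.sum_eq_add_of_mem (w - 1) (w + 1) (mem_univ _) (mem_univ _) (hne w) hterm]
    have e1 : c w (w - 1) = c (w - 1 + 1) (w - 1) := by
      congr 1
      ring
    have e2 : c w (w + 1) = - c (w + 1) w := hanti _ _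
    rw [e1, e2, D]
    ring
  · rintro ⟨b, hb, rfl⟩
    have hnd : ∀ u v : Fin n, ¬ (v = u + 1 ∧ u = v + 1) := by
      rintro u v ⟨h1, h2⟩
      apply two_ne hn
      have h3 : u + 2 = u := by rw [show u + 2 = u + 1 + 1 by ring, ← h1, ← h2]
      calc (2 : Fin n) = u + 2 - u := by ring
        _ = 0 := by rw [h3]; ring
    refine ⟨fun u v => if v = u + 1 then -(b u) else if u = v + 1 then b v else 0, ?_, ?_, ?_, ?_⟩
    · intro u v
      show (if v = u + 1 then -(b u) else if u = v + 1 then b v else 0)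
        = - (if u = v + 1 then -(b v) else if v = u + 1 then b u else 0)
      by_cases h1 : v = u + 1
      · have h2 : ¬ u = v + 1 := fun h2 => hnd u v ⟨h1, h2⟩
        rw [if_pos h1, if_neg h2, if_pos h1]
      · by_cases h2 : u = v + 1
        · rw [if_neg h1, if_pos h2, if_pos h2, neg_neg]
        · rw [if_neg h1, if_neg h2, if_neg h2, if_neg h1, neg_zero]
    · intro u v huv
      rw [adj_iff hn] at huv
      push_neg at huv
      show (if v = u + 1 then -(b u) else if u = v + 1 then b v else 0) = 0
      rw [if_neg huv.2, if_neg huv.1]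
    · intro u v
      show |if v = u + 1 then -(b u) else if u = v + 1 then b v else 0| ≤ 1
      by_cases h1 : v = u + 1
      · rw [if_pos h1, abs_neg]; exact hb u
      · by_cases h2 : u = v + 1
        · rw [if_neg h1, if_pos h2]; exact hb v
        · rw [if_neg h1, if_neg h2, abs_zero]; norm_num
    · funext w
      show D b w = ∑ u, (if u = w + 1 then -(b w) else if w = u + 1 then b u else 0)
      have hterm : ∀ u ∈ univ, u ≠ w - 1 ∧ u ≠ w + 1 →
          (if u = w + 1 then -(b w) else if w = u + 1 then b u else 0) = 0 := by
        rintro u _ ⟨h1, h2⟩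
        rw [if_neg h2, if_neg (fun h => h1 (by rw [h]; ring))]
      rw [Finset.sum_eq_add_of_mem (w - 1) (w + 1) (mem_univ _) (mem_univ _) (hne w) hterm]
      rw [if_neg (hne w), if_pos (show w = w - 1 + 1 by ring), if_pos rfl, D]
      ring

def Dlin (n : ℕ) [NeZero n] : (Fin n → ℝ) →ₗ[ℝ] (Fin n → ℝ) where
  toFun := D
  map_add' := by intro a b; funext v; simp [D]; ring
  map_smul' := by intro r a; funext v; simp [D]; ring

lemma Dlin_apply (b : Fin n → ℝ) : Dlin n b = D b := rfl


/-- solutions of the "discrete derivative zero" equation are constant -/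
lemma const_of_succ (s : Fin n → ℝ) (h : ∀ v, s (v + 1) = s v) : ∀ v, s v = s 0 := by
  have key : ∀ m : ℕ, s (m : Fin n) = s 0 := by
    intro m
    induction m with
    | zero => norm_num
    | succ m ih => rw [Nat.cast_add_one, h, ih]
  intro v
  rw [← Fin.cast_val_eq_self v]
  exact key v.val

lemma D_eq_zero (s : Fin n → ℝ) (h : D s = 0) : ∀ v, s v = s 0 := by
  apply const_of_succ
  intro v
  have hv := congrFun h (v + 1)
  simp only [D, Pi.zero_apply, add_sub_cancel_right] at hv
  linarith

/-- the sums of `del a` telescope to zero -/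
lemma sum_del (a : Fin n → ℝ) : ∑ w, del a w = 0 := by
  have h : ∑ w : Fin n, a (w + 1) = ∑ w : Fin n, a w :=
    Fintype.sum_equiv (Equiv.addRight (1 : Fin n)) _ _ (fun w => by simp)
  simp only [del, Finset.sum_sub_distrib, h, sub_self]

/-- pairing of a functional with a boundary -/
lemma pairing (a b : Fin n → ℝ) : ∑ w, a w * D b w = ∑ w, del a w * b w := by
  have h : ∑ w : Fin n, a (w + 1) * b w = ∑ w : Fin n, a w * b (w - 1) :=
    Fintype.sum_equiv (Equiv.addRight (1 : Fin n)) _ _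
      (fun w => by simp [add_sub_cancel_right])
  simp only [D, del, mul_sub, sub_mul, Finset.sum_sub_distrib, h]

/-- every vector with zero sum is a discrete derivative -/
lemma exists_a (hn : 3 ≤ n) (d : Fin n → ℝ) (hd : ∑ w, d w = 0) : ∃ a : Fin n → ℝ, del a = d := by
  refine ⟨fun v => ∑ i ∈ Finset.range v.val, d (i : Fin n), ?_⟩
  funext w
  show (∑ i ∈ Finset.range (w + 1).val, d (i : Fin n)) - ∑ i ∈ Finset.range w.val, d (i : Fin n) = d w
  have hv1 : (1 : Fin n).val = 1 := by rw [Fin.val_one', Nat.mod_eq_of_lt (by omega)]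
  have hadd : (w + 1).val = (w.val + 1) % n := by rw [Fin.add_def, hv1]
  by_cases hw : w.val + 1 < n
  · rw [hadd, Nat.mod_eq_of_lt hw, Finset.sum_range_succ, Fin.cast_val_eq_self]
    ring
  · have hval : w.val = n - 1 := by have := w.is_lt; omega
    obtain ⟨m, hm⟩ : ∃ m, n = m + 1 := ⟨n - 1, by omega⟩
    have hvm : w.val = m := by omega
    have h0 : (w + 1).val = 0 := by rw [hadd, hvm, hm, Nat.mod_self]
    rw [h0]
    have htot : ∑ i ∈ Finset.range n, d (i : Fin n) = 0 := by
      rw [← hd, ← Fin.sum_univ_eq_sum_range (fun i => d (i : Fin n)) n]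
      exact Finset.sum_congr rfl (fun i _ => by rw [Fin.cast_val_eq_self])
    have key : (∑ i ∈ Finset.range m, d (i : Fin n)) + d w = 0 := by
      have hw2 : ((m:ℕ) : Fin n) = w := by rw [← hvm, Fin.cast_val_eq_self]
      rw [← hw2, ← Finset.sum_range_succ, ← hm]
      exact htot
    rw [Finset.range_zero, Finset.sum_empty, hvm]
    linarith

-- real helper lemmas
lemma term_le {d b : ℝ} (hb : |b| ≤ 1) : d * b ≤ |d| :=
  le_trans (le_abs_self _) (by rw [abs_mul]; exact mul_le_of_le_one_right (abs_nonneg d) hb)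

lemma mul_sign_cast (d : ℝ) : d * ((SignType.sign d : SignType) : ℝ) = |d| := by
  rcases lt_trichotomy d 0 with h | h | h
  · rw [sign_neg h, abs_of_neg h]; norm_num
  · simp [h]
  · rw [sign_pos h, abs_of_pos h]; norm_num

lemma term_eq {d b : ℝ} (h : d * b = |d|) (hd : d ≠ 0) :
    b = ((SignType.sign d : SignType) : ℝ) := by
  rcases lt_trichotomy d 0 with hlt | hlt | hlt
  · rw [sign_neg hlt]
    rw [abs_of_neg hlt] at h
    have : d * b = d * (-1) := by rw [h]; ring
    have := mul_left_cancel₀ hd this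
    rw [this]; norm_num
  · exact absurd hlt hd
  · rw [sign_pos hlt]
    rw [abs_of_pos hlt] at h
    have : d * b = d * 1 := by rw [h]; ring
    have := mul_left_cancel₀ hd this
    rw [this]; norm_num

lemma term_eq' {d b : ℝ} (h : d ≠ 0 → b = ((SignType.sign d : SignType) : ℝ)) :
    d * b = |d| := by
  by_cases hd : d ≠ 0
  · rw [h hd]; exact mul_sign_cast d
  · push_neg at hd; simp [hd]

lemma sign_cast_eq {σ : SignType} {d : ℝ} (h : SignType.sign d = σ) (hσ : σ ≠ 0) :
    (σ : ℝ) = ((SignType.sign d : SignType) : ℝ) := by rw [h]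

/-- the exposed face cut out by the functional `x ↦ ∑ a w * x w` on the zonotope. -/
lemma face_of_functional (a : Fin n → ℝ) :
    {x ∈ Zset n | ∀ y ∈ Zset n, ∑ w, a w * y w ≤ ∑ w, a w * x w}
      = Fface (fun w => SignType.sign (del a w)) := by
  set σ : Fin n → SignType := fun w => SignType.sign (del a w) with hσ
  set M : ℝ := ∑ w, |del a w| with hM
  have hcube : ∀ τ : Fin n → SignType, ∀ w, |pt τ w| ≤ 1 := fun τ w => abs_cast_le_one _
  have hptval : ∑ w, del a w * pt σ w = M := by
    exact Finset.sum_congr rfl (fun w _ => mul_sign_cast _)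
  have hbound : ∀ b : Fin n → ℝ, (∀ w, |b w| ≤ 1) → ∑ w, del a w * b w ≤ M :=
    fun b hb => Finset.sum_le_sum (fun w _ => term_le (hb w))
  have hptmem : D (pt σ) ∈ Zset n := ⟨pt σ, hcube σ, rfl⟩
  ext x
  constructor
  · rintro ⟨⟨b, hb, rfl⟩, hmax⟩
    have h1 : M ≤ ∑ w, a w * D b w := by
      have := hmax (D (pt σ)) hptmem
      rw [pairing, hptval] at this
      exact this
    rw [pairing] at h1
    have h2 : ∑ w, del a w * b w = M := le_antisymm (hbound b hb) h1
    refine ⟨b, hb, ?_, rfl⟩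
    intro w hw
    have hterm : ∀ i ∈ univ, del a i * b i = |del a i| := by
      rw [← Finset.sum_eq_sum_iff_of_le (fun i _ => term_le (hb i))]
      rw [h2]
    have hd0 : del a w ≠ 0 := fun h => hw (by rw [hσ]; simp [h])
    exact term_eq (hterm w (mem_univ w)) hd0
  · rintro ⟨b, hb, hfix, rfl⟩
    have hval : ∑ w, del a w * b w = M := by
      refine Finset.sum_congr rfl (fun w _ => term_eq' (fun hd => ?_))
      rw [hfix w (by rw [hσ]; simpa using sign_ne_zero.mpr hd)]
    refine ⟨⟨b, hb, rfl⟩, ?_⟩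
    rintro y ⟨b', hb', rfl⟩
    rw [pairing, pairing, hval]
    exact hbound b' hb'

lemma mixed_of_del (a : Fin n → ℝ) (hne : ∃ w, del a w ≠ 0) :
    Mixed (fun w => SignType.sign (del a w)) := by
  obtain ⟨w0, hw0⟩ := hne
  constructor
  · by_contra h
    push_neg at h
    have hle : ∀ w ∈ univ, del a w ≤ 0 := by
      intro w _
      by_contra hpos
      push_neg at hpos
      exact h w (sign_pos hpos)
    have := (Finset.sum_eq_zero_iff_of_nonpos hle).mp (sum_del a) w0 (mem_univ w0)
    exact hw0 this
  · by_contra h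
    push_neg at h
    have hle : ∀ w ∈ univ, 0 ≤ del a w := by
      intro w _
      by_contra hneg
      push_neg at hneg
      exact h w (sign_neg hneg)
    have := (Finset.sum_eq_zero_iff_of_nonneg hle).mp (sum_del a) w0 (mem_univ w0)
    exact hw0 this

lemma exists_realizing (hn : 3 ≤ n) {σ : Fin n → SignType} (hmix : Mixed σ) :
    ∃ a : Fin n → ℝ, (∀ w, SignType.sign (del a w) = σ w) := by
  classical
  set P : ℕ := (univ.filter (fun w => σ w = 1)).card with hP
  set Mm : ℕ := (univ.filter (fun w => σ w = -1)).card with hMm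
  have hP1 : 0 < P := Finset.card_pos.mpr (by obtain ⟨w, hw⟩ := hmix.1; exact ⟨w, by simp [hw]⟩)
  have hM1 : 0 < Mm := Finset.card_pos.mpr (by obtain ⟨w, hw⟩ := hmix.2; exact ⟨w, by simp [hw]⟩)
  set dd : Fin n → ℝ := fun w => if σ w = 1 then (Mm : ℝ) else if σ w = -1 then -(P : ℝ) else 0
    with hdd
  have hval : ∀ w, dd w = if σ w = 1 then (Mm:ℝ) else if σ w = -1 then -(P:ℝ) else 0 :=
    fun w => rfl
  have hsum : ∑ w, dd w = 0 := by
    rw [← Finset.sum_filter_add_sum_filter_not univ (fun w => σ w = 1)]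
    have e1 : ∑ w ∈ univ.filter (fun w => σ w = 1), dd w = (P : ℝ) * Mm := by
      have h : ∀ w ∈ univ.filter (fun w => σ w = 1), dd w = (Mm : ℝ) := by
        intro w hw
        rw [hval w, if_pos (Finset.mem_filter.mp hw).2]
      rw [Finset.sum_congr rfl h, Finset.sum_const, hP, nsmul_eq_mul]
    have e2 : ∑ w ∈ univ.filter (fun w => ¬ σ w = 1), dd w = (Mm : ℝ) * (-(P:ℝ)) := by
      rw [← Finset.sum_filter_add_sum_filter_not (univ.filter (fun w => ¬ σ w = 1))
        (fun w => σ w = -1)]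
      have e3 : ∑ w ∈ (univ.filter (fun w => ¬ σ w = 1)).filter (fun w => σ w = -1), dd w
          = (Mm : ℝ) * (-(P:ℝ)) := by
        have hF : (univ.filter (fun w => ¬ σ w = 1)).filter (fun w => σ w = -1)
            = univ.filter (fun w => σ w = -1) := by
          rw [Finset.filter_filter]
          exact Finset.filter_congr (fun w _ => by
            constructor
            · rintro ⟨-, h⟩; exact h
            · intro h; exact ⟨by rw [h]; decide, h⟩)
        have h : ∀ w ∈ univ.filter (fun w => σ w = -1), dd w = -(P : ℝ) := by
          intro w hw
          have hw2 := (Finset.mem_filter.mp hw).2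
          rw [hval w, if_neg (by rw [hw2]; decide), if_pos hw2]
        rw [hF, Finset.sum_congr rfl h, Finset.sum_const, hMm, nsmul_eq_mul]
      have e4 : ∑ w ∈ (univ.filter (fun w => ¬ σ w = 1)).filter (fun w => ¬ σ w = -1), dd w
          = 0 := by
        refine Finset.sum_eq_zero (fun w hw => ?_)
        rw [Finset.mem_filter, Finset.mem_filter] at hw
        rw [hval w, if_neg hw.1.2, if_neg hw.2]
      rw [e3, e4, add_zero]
    rw [e1, e2]
    push_cast
    ring
  obtain ⟨a, ha⟩ := exists_a hn dd hsum
  refine ⟨a, fun w => ?_⟩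
  have hw : del a w = dd w := congrFun ha w
  rcases hs : σ w with _ | _ | _
  · rw [hw, hval w, hs, if_neg (by decide), if_neg (by decide)]
    exact sign_zero
  · rw [hw, hval w, hs, if_neg (by decide), if_pos (by decide)]
    exact sign_neg (neg_lt_zero.mpr (by exact_mod_cast hP1))
  · rw [hw, hval w, hs, if_pos (by decide)]
    exact sign_pos (by exact_mod_cast hM1)

def U (w : Fin n) : Fin n → ℝ := D (Pi.single w 1)

def zeroset (σ : Fin n → SignType) : Finset (Fin n) := univ.filter (fun w => σ w = 0)

lemma pt_mem (σ : Fin n → SignType) : D (pt σ) ∈ Fface σ :=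
  ⟨pt σ, fun w => abs_cast_le_one _, fun _ _ => rfl, rfl⟩

lemma Fface_nonempty (σ : Fin n → SignType) : (Fface σ).Nonempty := ⟨_, pt_mem σ⟩

/-- a function vanishing off `Zs` is a combination of the `Pi.single`s on `Zs` -/
lemma sum_single {Zs : Finset (Fin n)} {s : Fin n → ℝ} (hs : ∀ v ∉ Zs, s v = 0) :
    ∑ i : Zs, s (i : Fin n) • (Pi.single (i : Fin n) (1:ℝ) : Fin n → ℝ) = s := by
  funext v
  rw [Finset.sum_apply]
  by_cases hv : v ∈ Zs
  · rw [Finset.sum_eq_single (⟨v, hv⟩ : Zs)]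
    · simp
    · intro i _ hi
      have hvi : v ≠ (i : Fin n) := fun h => hi (Subtype.ext h.symm)
      simp [Pi.single_apply, hvi]
    · intro h; exact absurd (mem_univ _) h
  · rw [hs v hv]
    refine Finset.sum_eq_zero (fun i _ => ?_)
    have hvi : v ≠ (i : Fin n) := fun h => hv (h ▸ i.2)
    simp [Pi.single_apply, hvi]

lemma sum_smul_U {Zs : Finset (Fin n)} {s : Fin n → ℝ} (hs : ∀ v ∉ Zs, s v = 0) :
    ∑ i : Zs, s (i : Fin n) • U (i : Fin n) = D s := by
  have : ∑ i : Zs, s (i : Fin n) • U (i : Fin n)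
      = Dlin n (∑ i : Zs, s (i : Fin n) • (Pi.single (i : Fin n) (1:ℝ) : Fin n → ℝ)) := by
    rw [map_sum]
    exact Finset.sum_congr rfl (fun i _ => by rw [map_smul]; rfl)
  rw [this, sum_single hs]
  rfl

lemma lin_indep {Zs : Finset (Fin n)} (hZ : Zs ≠ univ) :
    LinearIndependent ℝ (fun w : Zs => U (w : Fin n)) := by
  rw [Fintype.linearIndependent_iff]
  intro g hg i
  set s : Fin n → ℝ := fun v => if h : v ∈ Zs then g ⟨v, h⟩ else 0 with hsdef
  have hs : ∀ v ∉ Zs, s v = 0 := fun v hv => dif_neg hv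
  have hgs : ∀ i : Zs, g i = s (i : Fin n) := fun i => by
    rw [hsdef]; simp only; rw [dif_pos i.2]
  have hDs : D s = 0 := by
    rw [← sum_smul_U hs, ← hg]
    exact Finset.sum_congr rfl (fun i _ => by rw [hgs i])
  have hconst := D_eq_zero s hDs
  obtain ⟨v0, hv0⟩ : ∃ v, v ∉ Zs := by
    by_contra h
    push_neg at h
    exact hZ (Finset.eq_univ_iff_forall.mpr h)
  have h0 : s 0 = 0 := by rw [← hconst v0]; exact hs v0 hv0
  rw [hgs i, hconst (i : Fin n), h0]

lemma mem_translate {σ : Fin n → SignType} {w : Fin n} (hw : w ∈ zeroset σ) :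
    D (pt σ) + U w ∈ Fface σ := by
  have hσw : σ w = 0 := (Finset.mem_filter.mp hw).2
  refine ⟨pt σ + Pi.single w 1, ?_, ?_, ?_⟩
  · intro v
    by_cases hv : v = w
    · subst hv
      simp [pt, hσw]
    · simp [Pi.single_apply, hv, pt, abs_cast_le_one]
  · intro v hv
    have hvw : v ≠ w := fun h => hv (h ▸ hσw)
    simp [Pi.single_apply, hvw, pt]
  · have h := (Dlin n).map_add (pt σ) (Pi.single w 1)
    show D (pt σ) + U w = D (pt σ + Pi.single w 1)
    exact h.symm

lemma direction_Fface (σ : Fin n → SignType) :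
    (affineSpan ℝ (Fface σ)).direction
      = Submodule.span ℝ (Set.range (fun w : zeroset σ => U (w : Fin n))) := by
  set sp := Submodule.span ℝ (Set.range (fun w : zeroset σ => U (w : Fin n))) with hsp
  apply le_antisymm
  · have hsub : Fface σ ⊆ (AffineSubspace.mk' (D (pt σ)) sp : Set (Fin n → ℝ)) := by
      rintro x ⟨b, hb, hfix, rfl⟩
      rw [AffineSubspace.mem_coe, AffineSubspace.mem_mk']
      have hsv : ∀ v ∉ zeroset σ, (b - pt σ) v = 0 := by
        intro v hv
        have hσv : σ v ≠ 0 := by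
          intro h
          exact hv (Finset.mem_filter.mpr ⟨mem_univ v, h⟩)
        simp [hfix v hσv, pt]
      have : D b -ᵥ D (pt σ) = D (b - pt σ) := by
        show D b - D (pt σ) = D (b - pt σ)
        exact ((Dlin n).map_sub b (pt σ)).symm
      rw [this, ← sum_smul_U hsv]
      exact Submodule.sum_mem _ (fun i _ =>
        Submodule.smul_mem _ _ (Submodule.subset_span ⟨i, rfl⟩))
    calc (affineSpan ℝ (Fface σ)).direction
        ≤ (AffineSubspace.mk' (D (pt σ)) sp).direction :=
          AffineSubspace.direction_le (affineSpan_le.mpr hsub)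
      _ = sp := AffineSubspace.direction_mk' _ _
  · rw [Submodule.span_le]
    rintro - ⟨w, rfl⟩
    have h1 : D (pt σ) + U (w : Fin n) ∈ affineSpan ℝ (Fface σ) :=
      subset_affineSpan ℝ _ (mem_translate w.2)
    have h2 : D (pt σ) ∈ affineSpan ℝ (Fface σ) := subset_affineSpan ℝ _ (pt_mem σ)
    have := AffineSubspace.vsub_mem_direction h1 h2
    simpa using this

lemma zeroset_ne_univ {σ : Fin n → SignType} (hmix : Mixed σ) : zeroset σ ≠ univ := by
  obtain ⟨w, hw⟩ := hmix.1
  intro h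
  have : w ∈ zeroset σ := h ▸ mem_univ w
  rw [zeroset, Finset.mem_filter] at this
  rw [hw] at this
  exact absurd this.2 (by decide)

lemma finrank_Fface {σ : Fin n → SignType} (hmix : Mixed σ) :
    Module.finrank ℝ (affineSpan ℝ (Fface σ)).direction = (zeroset σ).card := by
  rw [direction_Fface, finrank_span_eq_card (lin_indep (zeroset_ne_univ hmix))]
  exact Fintype.card_coe _

/-- uniqueness of the cube representative of a point of a mixed face -/
lemma rep_unique {σ : Fin n → SignType} (hmix : Mixed σ) {b' : Fin n → ℝ}
    (hb' : ∀ w, |b' w| ≤ 1) (hmem : D b' ∈ Fface σ) :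
    ∀ w, σ w ≠ 0 → b' w = (σ w : ℝ) := by
  obtain ⟨b, hb, hfix, heq⟩ := hmem
  have hD0 : D (b' - b) = 0 := by
    have : Dlin n (b' - b) = Dlin n b' - Dlin n b := (Dlin n).map_sub b' b
    show Dlin n (b' - b) = 0
    rw [this]
    show D b' - D b = 0
    rw [← heq]
    ring
  have hconst := D_eq_zero _ hD0
  set c : ℝ := (b' - b) 0 with hc
  have hbc : ∀ v, b' v = b v + c := by
    intro v
    have := hconst v
    simp only [Pi.sub_apply] at this
    linarith
  obtain ⟨w1, hw1⟩ := hmix.1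
  obtain ⟨w2, hw2⟩ := hmix.2
  have h1 : b w1 = 1 := by rw [hfix w1 (by rw [hw1]; decide), hw1]; rfl
  have h2 : b w2 = -1 := by rw [hfix w2 (by rw [hw2]; decide), hw2]; rfl
  have hcle : c ≤ 0 := by
    have := abs_le.mp (hb' w1)
    rw [hbc w1, h1] at this
    linarith [this.2]
  have hcge : 0 ≤ c := by
    have := abs_le.mp (hb' w2)
    rw [hbc w2, h2] at this
    linarith [this.1]
  have hc0 : c = 0 := le_antisymm hcle hcge
  intro w hw
  rw [hbc w, hc0, add_zero]
  exact hfix w hw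

lemma Fface_inj {σ τ : Fin n → SignType} (hmσ : Mixed σ) (hmτ : Mixed τ)
    (h : Fface σ = Fface τ) : σ = τ := by
  have h1 : ∀ w, τ w ≠ 0 → (σ w : ℝ) = (τ w : ℝ) :=
    rep_unique hmτ (fun w => abs_cast_le_one _) (h ▸ pt_mem σ)
  have h2 : ∀ w, σ w ≠ 0 → (τ w : ℝ) = (σ w : ℝ) :=
    rep_unique hmσ (fun w => abs_cast_le_one _) (h ▸ pt_mem τ)
  funext w
  by_cases hτ : τ w = 0
  · by_cases hσ : σ w = 0
    · rw [hσ, hτ]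
    · have := h2 w hσ
      rw [hτ] at this
      exact absurd (cast_inj_sign this.symm) hσ
  · exact cast_inj_sign (h1 w hτ)

lemma pi_decomp (x : Fin n → ℝ) : x = ∑ w, x w • (Pi.single w (1:ℝ) : Fin n → ℝ) := by
  have h : ∀ w, (x w • (Pi.single w (1:ℝ) : Fin n → ℝ)) = Pi.single w (x w) := by
    intro w
    funext v
    simp only [Pi.smul_apply, Pi.single_apply, smul_eq_mul, mul_ite, mul_one, mul_zero]
  rw [Finset.sum_congr rfl (fun w _ => h w), Finset.univ_sum_single]

lemma clm_eval (l : (Fin n → ℝ) →L[ℝ] ℝ) (x : Fin n → ℝ) :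
    l x = ∑ w, x w * l (Pi.single w 1) := by
  calc l x = l (∑ w, x w • (Pi.single w (1:ℝ) : Fin n → ℝ)) := by rw [← pi_decomp]
    _ = ∑ w, x w * l (Pi.single w 1) := by
        rw [map_sum]
        exact Finset.sum_congr rfl (fun w _ => by rw [map_smul]; rfl)

lemma isExposed_Fface (hn : 3 ≤ n) {σ : Fin n → SignType} (hmix : Mixed σ) :
    IsExposed ℝ (Zset n) (Fface σ) := by
  intro _
  obtain ⟨a, ha⟩ := exists_realizing hn hmix
  refine ⟨∑ w, a w • (ContinuousLinearMap.proj w :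
    ((w : Fin n) → ℝ) →L[ℝ] ℝ), ?_⟩
  have heval : ∀ x : Fin n → ℝ,
      (∑ w, a w • (ContinuousLinearMap.proj w : ((w : Fin n) → ℝ) →L[ℝ] ℝ)) x
        = ∑ w, a w * x w := by
    intro x
    simp [ContinuousLinearMap.sum_apply, ContinuousLinearMap.proj_apply]
  have hσ : σ = fun w => SignType.sign (del a w) := funext (fun w => (ha w).symm)
  rw [hσ, ← face_of_functional a]
  ext x
  simp only [Set.mem_setOf_eq, heval]

lemma classify {G : Set (Fin n → ℝ)} (l : (Fin n → ℝ) →L[ℝ] ℝ)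
    (hl : G = {x ∈ Zset n | ∀ y ∈ Zset n, l y ≤ l x}) :
    G = Zset n ∨ ∃ σ : Fin n → SignType, Mixed σ ∧ G = Fface σ := by
  set a : Fin n → ℝ := fun w => l (Pi.single w 1) with hadef
  have heval : ∀ x : Fin n → ℝ, l x = ∑ w, a w * x w := by
    intro x
    rw [clm_eval l x]
    exact Finset.sum_congr rfl (fun w _ => mul_comm _ _)
  by_cases hd : ∀ w, del a w = 0
  · left
    rw [hl]
    ext x
    constructor
    · rintro ⟨hx, -⟩; exact hx
    · intro hx
      refine ⟨hx, fun y hy => ?_⟩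
      have hz : ∀ z ∈ Zset n, l z = 0 := by
        rintro z ⟨b, hb, rfl⟩
        rw [heval, pairing]
        exact Finset.sum_eq_zero (fun w _ => by rw [hd w, zero_mul])
      rw [hz x hx, hz y hy]
  · push_neg at hd
    right
    refine ⟨fun w => SignType.sign (del a w), mixed_of_del a hd, ?_⟩
    rw [hl, ← face_of_functional a]
    ext x
    simp only [Set.mem_setOf_eq, heval]

lemma zeroset_zero : zeroset (fun _ : Fin n => (0 : SignType)) = univ := by
  refine Finset.eq_univ_iff_forall.mpr (fun w => Finset.mem_filter.mpr ⟨mem_univ w, rfl⟩)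

lemma Zset_eq_Fface_zero : Zset n = Fface (fun _ : Fin n => (0 : SignType)) := by
  ext x
  constructor
  · rintro ⟨b, hb, rfl⟩; exact ⟨b, hb, fun w hw => absurd rfl hw, rfl⟩
  · rintro ⟨b, hb, -, rfl⟩; exact ⟨b, hb, rfl⟩

lemma sum_U_zero : ∑ w : Fin n, U w = 0 := by
  have h1 : ∑ w : Fin n, (Pi.single w (1:ℝ) : Fin n → ℝ) = fun _ => 1 :=
    Finset.univ_sum_single (fun _ => (1:ℝ))
  have h2 : ∑ w : Fin n, U w = Dlin n (∑ w : Fin n, (Pi.single w (1:ℝ) : Fin n → ℝ)) := by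
    rw [map_sum]
    rfl
  rw [h2, h1]
  funext v
  show (fun _ : Fin n => (1:ℝ)) (v - 1) - 1 = 0
  norm_num

lemma finrank_Zset (hn : 3 ≤ n) :
    Module.finrank ℝ (affineSpan ℝ (Zset n)).direction = n - 1 := by
  rw [Zset_eq_Fface_zero, direction_Fface]
  set e0 : Finset (Fin n) := univ.erase 0 with he0
  have hspan : Submodule.span ℝ (Set.range
        (fun w : zeroset (fun _ : Fin n => (0:SignType)) => U (w : Fin n)))
      = Submodule.span ℝ (Set.range (fun w : e0 => U (w : Fin n))) := by
    apply le_antisymm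
    · rw [Submodule.span_le]
      rintro - ⟨w, rfl⟩
      show U (w : Fin n) ∈ _
      by_cases hw : (w : Fin n) = 0
      · rw [hw]
        have hsum := Finset.sum_erase_add univ U (mem_univ (0 : Fin n))
        rw [sum_U_zero] at hsum
        have : U (0 : Fin n) = -∑ i ∈ univ.erase 0, U i := by
          rw [eq_neg_iff_add_eq_zero, add_comm]
          exact hsum
        rw [this]
        refine Submodule.neg_mem _ (Submodule.sum_mem _ (fun i hi => ?_))
        exact Submodule.subset_span ⟨⟨i, hi⟩, rfl⟩
      · exact Submodule.subset_span ⟨⟨w, Finset.mem_erase.mpr ⟨hw, mem_univ _⟩⟩, rfl⟩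
    · rw [Submodule.span_le]
      rintro - ⟨w, rfl⟩
      exact Submodule.subset_span ⟨⟨w, Finset.mem_filter.mpr ⟨mem_univ _, rfl⟩⟩, rfl⟩
  rw [hspan, finrank_span_eq_card (lin_indep (by
    intro h
    have : (0 : Fin n) ∈ e0 := h ▸ mem_univ 0
    exact absurd this (Finset.notMem_erase 0 univ)))]
  rw [Fintype.card_coe, he0, Finset.card_erase_of_mem (mem_univ 0), Finset.card_univ,
    Fintype.card_fin]

lemma count_bools {α : Type} [Fintype α] [DecidableEq α] [Nonempty α] :
    (univ.filter (fun f : α → Bool => (∃ a, f a = true) ∧ (∃ a, f a = false))).card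
      = 2 ^ Fintype.card α - 2 := by
  classical
  have hne : ((fun _ => true : α → Bool)) ≠ (fun _ => false) := by
    intro h
    obtain ⟨a⟩ := (inferInstance : Nonempty α)
    exact absurd (congrFun h a) (by simp)
  have hcompl : univ.filter (fun f : α → Bool =>
      ¬((∃ a, f a = true) ∧ (∃ a, f a = false)))
      = {fun _ => true, fun _ => false} := by
    ext f
    simp only [Finset.mem_filter, Finset.mem_insert, Finset.mem_singleton, mem_univ, true_and]
    constructor
    · intro h
      rw [not_and_or] at h
      rcases h with h | h
      · push_neg at h
        right
        funext a
        simpa using h a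
      · push_neg at h
        left
        funext a
        simpa using h a
    · rintro (rfl | rfl)
      · rintro ⟨-, a, ha⟩
        simp at ha
      · rintro ⟨⟨a, ha⟩, -⟩
        simp at ha
  have htot := Finset.card_filter_add_card_filter_not
    (s := (univ : Finset (α → Bool)))
    (p := fun f : α → Bool => (∃ a, f a = true) ∧ (∃ a, f a = false))
  rw [hcompl] at htot
  have h2 : ({fun _ => true, fun _ => false} : Finset (α → Bool)).card = 2 := by
    rw [Finset.card_insert_of_notMem (by simpa using hne), Finset.card_singleton]
  have huniv : (univ : Finset (α → Bool)).card = 2 ^ Fintype.card α := by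
    rw [Finset.card_univ, Fintype.card_fun, Fintype.card_bool]
  rw [h2, huniv] at htot
  exact Nat.eq_sub_of_add_eq htot

lemma count_sigma (n k : ℕ) (hk2 : 2 ≤ k) (hkn : k ≤ n) :
    Nat.card {σ : Fin n → SignType // Mixed σ ∧ (zeroset σ).card = n - k}
      = (2 ^ k - 2) * n.choose k := by
  classical
  rw [Nat.card_eq_fintype_card, Fintype.card_subtype]
  have hzs : ∀ σ : Fin n → SignType,
      (zeroset σ).card + (univ.filter (fun w => ¬ σ w = 0)).card = n := by
    intro σ
    rw [zeroset, Finset.card_filter_add_card_filter_not, Finset.card_univ,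
      Fintype.card_fin]
  have hsplit : univ.filter (fun σ : Fin n → SignType => Mixed σ ∧ (zeroset σ).card = n - k)
      = (univ.powersetCard k).biUnion (fun s => univ.filter
          (fun σ : Fin n → SignType => univ.filter (fun w => ¬ σ w = 0) = s ∧ Mixed σ)) := by
    ext σ
    simp only [Finset.mem_filter, Finset.mem_biUnion, mem_univ, true_and,
      Finset.mem_powersetCard_univ]
    constructor
    · rintro ⟨hm, hz⟩
      refine ⟨univ.filter (fun w => ¬ σ w = 0), ?_, rfl, hm⟩
      have := hzs σ
      omega
    · rintro ⟨s, hs, rfl, hm⟩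
      have := hzs σ
      exact ⟨hm, by omega⟩
  rw [hsplit, Finset.card_biUnion]
  · have hcard : ∀ s ∈ univ.powersetCard k, (univ.filter
        (fun σ : Fin n → SignType => univ.filter (fun w => ¬ σ w = 0) = s ∧ Mixed σ)).card
        = 2 ^ k - 2 := by
      intro s hs
      rw [Finset.mem_powersetCard_univ] at hs
      haveI hne : Nonempty {w // w ∈ s} :=
        Finset.Nonempty.to_subtype (Finset.card_pos.mp (by omega))
      have hcb := count_bools (α := {w // w ∈ s})
      rw [Fintype.card_coe, hs] at hcb
      rw [← hcb]
      refine Finset.card_bij'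
          (fun σ _ => fun a : {w // w ∈ s} => (decide (σ (a : Fin n) = 1)))
          (fun f _ => fun w : Fin n =>
            if h : w ∈ s then (if f ⟨w, h⟩ then 1 else -1) else 0) ?_ ?_ ?_ ?_
      · -- membership forward
        beta_reduce
        intro σ hσ
        rw [Finset.mem_filter] at hσ
        obtain ⟨-, hsupp, hm⟩ := hσ
        rw [Finset.mem_filter]
        refine ⟨mem_univ _, ?_, ?_⟩
        · obtain ⟨w, hw⟩ := hm.1
          have hws : w ∈ s := by
            rw [← hsupp, Finset.mem_filter]
            exact ⟨mem_univ _, by rw [hw]; decide⟩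
          exact ⟨⟨w, hws⟩, by rw [decide_eq_true_eq]; exact hw⟩
        · obtain ⟨w, hw⟩ := hm.2
          have hws : w ∈ s := by
            rw [← hsupp, Finset.mem_filter]
            exact ⟨mem_univ _, by rw [hw]; decide⟩
          refine ⟨⟨w, hws⟩, ?_⟩
          rw [decide_eq_false_iff_not]
          rw [hw]
          decide
      · -- membership backward
        beta_reduce
        intro f hf
        rw [Finset.mem_filter] at hf
        obtain ⟨-, ⟨a1, ha1⟩, ⟨a2, ha2⟩⟩ := hf
        rw [Finset.mem_filter]
        refine ⟨mem_univ _, ?_, ?_, ?_⟩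
        · ext w
          rw [Finset.mem_filter]
          constructor
          · rintro ⟨-, hw⟩
            by_contra hws
            beta_reduce at hw
            rw [dif_neg hws] at hw
            exact hw rfl
          · intro hws
            refine ⟨mem_univ _, ?_⟩
            beta_reduce
            rw [dif_pos hws]
            split <;> decide
        · refine ⟨a1, ?_⟩
          beta_reduce
          rw [dif_pos a1.2]
          have : f ⟨(a1 : Fin n), a1.2⟩ = f a1 := by congr
          rw [this, ha1, if_pos rfl]
        · refine ⟨a2, ?_⟩
          beta_reduce
          rw [dif_pos a2.2]
          have : f ⟨(a2 : Fin n), a2.2⟩ = f a2 := by congr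
          rw [this, ha2]
          simp
      · -- left inverse
        beta_reduce
        intro σ hσ
        rw [Finset.mem_filter] at hσ
        obtain ⟨-, hsupp, -⟩ := hσ
        funext w
        by_cases hws : w ∈ s
        · rw [dif_pos hws]
          have hσw : σ w ≠ 0 := by
            have := hws
            rw [← hsupp, Finset.mem_filter] at this
            exact this.2
          rcases hval : σ w with _ | _ | _
          · exact absurd hval hσw
          · decide
          · decide
        · rw [dif_neg hws]
          have : ¬ σ w ≠ 0 := by
            intro hσw
            exact hws (by rw [← hsupp, Finset.mem_filter]; exact ⟨mem_univ _, hσw⟩)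
          push_neg at this
          rw [this]
      · -- right inverse
        beta_reduce
        intro f hf
        funext a
        beta_reduce
        rw [dif_pos a.2]
        have hsub : (⟨(a : Fin n), a.2⟩ : {w // w ∈ s}) = a := by congr
        rw [hsub]
        cases hfa : f a <;> simp [hfa]
    rw [Finset.sum_congr rfl hcard, Finset.sum_const, Finset.card_powersetCard,
      Finset.card_univ, Fintype.card_fin, smul_eq_mul, mul_comm]
  · -- disjointness
    intro s hs t ht hst
    rw [Function.onFun, Finset.disjoint_left]
    intro σ hσs hσt
    rw [Finset.mem_filter] at hσs hσt
    exact hst (hσs.2.1 ▸ hσt.2.1)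


lemma count_and_classify (hn : 3 ≤ n) (k : ℕ) (hk2 : 2 ≤ k) (hkn : k ≤ n) :
    Nat.card {σ : Fin n → SignType // Mixed σ ∧ (zeroset σ).card = n - k}
      = faceCount (SimpleGraph.cycleGraph n) (n - k) := by
  rw [faceCount]
  apply Nat.card_eq_of_bijective (fun σp =>
    ⟨Fface σp.1, Fface_nonempty _,
      by rw [zono_eq hn]; exact isExposed_Fface hn σp.2.1,
      by rw [finrank_Fface σp.2.1]; exact σp.2.2⟩)
  constructor
  · intro σ1 σ2 h
    have hval := congrArg Subtype.val h
    exact Subtype.ext (Fface_inj σ1.2.1 σ2.2.1 hval)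
  · rintro ⟨G, hne, hexp, hdim⟩
    obtain ⟨l, hl⟩ := hexp hne
    rw [zono_eq hn] at hl
    rcases classify l hl with hG | ⟨σ, hmix, hG⟩
    · exfalso
      rw [hG, finrank_Zset hn] at hdim
      omega
    · refine ⟨⟨σ, hmix, ?_⟩, ?_⟩
      · rw [← finrank_Fface hmix, ← hG]
        exact hdim
      · exact Subtype.ext hG.symm

end CycleZono

/-- The number of `(n-k)`-dimensional faces of `Z_{C_n}` is `(2 ^ k - 2) * (n choose k)`. -/
theorem faceCount_cycleGraph (n : ℕ) (hn : 3 ≤ n) (k : ℕ) (hk2 : 2 ≤ k) (hkn : k ≤ n) :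
    faceCount (SimpleGraph.cycleGraph n) (n - k) = (2 ^ k - 2) * n.choose k := by
  haveI : NeZero n := ⟨by omega⟩
  rw [← CycleZono.count_and_classify hn k hk2 hkn, CycleZono.count_sigma n k hk2 hkn]
end

section
/- Let Γ be a finite simple graph on vertex set V, let v ∈ V, and let A, B ⊆ V satisfy A ∪ B = V and A ∩ B = {v}, such that every edge of Γ has both endpoints in A or both endpoints in B (Γ is the wedge of Γ₁ := Γ|_A and Γ₂ := Γ|_B at v). Then, as an identity in ℤ[q], Σ over all flats F of Γ of a(Γ/F)·q^{rk(F)} = (Σ over all flats F₁ of Γ₁ of a(Γ₁/F₁)·q^{rk(F₁)}) · (Σ over all flats F₂ of Γ₂ of a(Γ₂/F₂)·q^{rk(F₂)}). -/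
open Polynomial

section Helpers

lemma transGen_map {α β} (f : α → β) (r : α → α → Prop) (s : β → β → Prop)
    (h : ∀ a b, r a b → s (f a) (f b)) {a b} (hab : Relation.TransGen r a b) :
    Relation.TransGen s (f a) (f b) := by
  induction hab with
  | single h' => exact .single (h _ _ h')
  | tail _ h' ih => exact .tail ih (h _ _ h')

lemma not_transGen_of_lt {α} (f : α → ℤ) (r : α → α → Prop)
    (h : ∀ a b, r a b → f a < f b) (a : α) : ¬ Relation.TransGen r a a := by
  intro hc
  have key : ∀ x y, Relation.TransGen r x y → f x < f y := by
    intro x y hxy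
    induction hxy with
    | single h' => exact h _ _ h'
    | tail _ h' ih => exact lt_trans ih (h _ _ h')
  exact lt_irrefl _ (key a a hc)

lemma exists_lt_of_acyclic {α : Type} [Finite α] (r : α → α → Prop)
    (h : ∀ a, ¬ Relation.TransGen r a a) : ∃ f : α → ℕ, ∀ a b, r a b → f a < f b := by
  refine ⟨fun a => Set.ncard {x | Relation.TransGen r x a}, fun a b hab => ?_⟩
  apply Set.ncard_lt_ncard _ (Set.toFinite _)
  constructor
  · intro x hx
    exact Relation.TransGen.tail hx hab
  · intro hsub
    exact h a (hsub (Relation.TransGen.single hab))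

end Helpers
section AocWedge

variable {W : Type} {S T : Set W} {w₀ : W}

/-- glue two relations on subtypes to a relation on the whole type -/
def glueRel (S T : Set W) (r₁ : ↥S → ↥S → Prop) (r₂ : ↥T → ↥T → Prop) : W → W → Prop :=
  fun u w => (∃ (hu : u ∈ S) (hw : w ∈ S), r₁ ⟨u, hu⟩ ⟨w, hw⟩) ∨
             (∃ (hu : u ∈ T) (hw : w ∈ T), r₂ ⟨u, hu⟩ ⟨w, hw⟩)

theorem aoc_wedge [Finite W] (Γ : SimpleGraph W)
    (hu : ∀ x, x ∈ S ∨ x ∈ T) (hi : ∀ x, x ∈ S → x ∈ T → x = w₀)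
    (hS : w₀ ∈ S) (hT : w₀ ∈ T)
    (hE : ∀ u w, Γ.Adj u w → (u ∈ S ∧ w ∈ S) ∨ (u ∈ T ∧ w ∈ T)) :
    acyclicOrientationCount Γ =
      acyclicOrientationCount (Γ.induce S) * acyclicOrientationCount (Γ.induce T) := by
  classical
  rw [acyclicOrientationCount, acyclicOrientationCount, acyclicOrientationCount,
    ← Nat.card_prod]
  apply Nat.card_congr
  refine
    { toFun := fun r => ⟨⟨fun a b => r.1 ↑a ↑b, ?_, ?_, ?_⟩, ⟨fun a b => r.1 ↑a ↑b, ?_, ?_, ?_⟩⟩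
      invFun := fun p => ⟨glueRel S T p.1.1 p.2.1, ?_, ?_, ?_⟩
      left_inv := ?_
      right_inv := ?_ }
  · exact fun a b h => r.2.1 _ _ h
  · exact fun a b h => r.2.2.1 _ _ h
  · intro a hc
    exact r.2.2.2 ↑a (transGen_map Subtype.val _ r.1 (fun _ _ h => h) hc)
  · exact fun a b h => r.2.1 _ _ h
  · exact fun a b h => r.2.2.1 _ _ h
  · intro a hc
    exact r.2.2.2 ↑a (transGen_map Subtype.val _ r.1 (fun _ _ h => h) hc)
  · -- glued is sub-adjacency
    rintro u w (⟨hu', hw', h⟩ | ⟨hu', hw', h⟩)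
    · exact p.1.2.1 _ _ h
    · exact p.2.2.1 _ _ h
  · -- Xor
    intro u w hadj
    rcases hE u w hadj with ⟨huS, hwS⟩ | ⟨huT, hwT⟩
    · have hx := p.1.2.2.1 ⟨u, huS⟩ ⟨w, hwS⟩ hadj
      have hne : u ≠ w := hadj.ne
      have hred : ∀ (x y : W) (hx' : x ∈ S) (hy' : y ∈ S), x ≠ y →
          (glueRel S T p.1.1 p.2.1 x y ↔ p.1.1 ⟨x, hx'⟩ ⟨y, hy'⟩) := by
        intro x y hx' hy' hxy
        constructor
        · rintro (⟨h1, h2, h⟩ | ⟨h1, h2, h⟩)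
          · exact h
          · exact absurd ((hi x hx' h1).trans (hi y hy' h2).symm) hxy
        · intro h; exact Or.inl ⟨hx', hy', h⟩
      simp only [Xor', Xor] at hx ⊢
      rw [hred u w huS hwS hne, hred w u hwS huS hne.symm]
      exact hx
    · have hx := p.2.2.2.1 ⟨u, huT⟩ ⟨w, hwT⟩ hadj
      have hne : u ≠ w := hadj.ne
      have hred : ∀ (x y : W) (hx' : x ∈ T) (hy' : y ∈ T), x ≠ y →
          (glueRel S T p.1.1 p.2.1 x y ↔ p.2.1 ⟨x, hx'⟩ ⟨y, hy'⟩) := by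
        intro x y hx' hy' hxy
        constructor
        · rintro (⟨h1, h2, h⟩ | ⟨h1, h2, h⟩)
          · exact absurd ((hi x h1 hx').trans (hi y h2 hy').symm) hxy
          · exact h
        · intro h; exact Or.inr ⟨hx', hy', h⟩
      simp only [Xor', Xor] at hx ⊢
      rw [hred u w huT hwT hne, hred w u hwT huT hne.symm]
      exact hx
  · -- acyclicity of glued
    obtain ⟨f₁, hf₁⟩ := exists_lt_of_acyclic p.1.1 p.1.2.2.2
    obtain ⟨f₂, hf₂⟩ := exists_lt_of_acyclic p.2.1 p.2.2.2.2
    set F : W → ℤ := fun u =>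
      if h : u ∈ S then (f₁ ⟨u, h⟩ : ℤ) - f₁ ⟨w₀, hS⟩
      else (f₂ ⟨u, (hu u).resolve_left h⟩ : ℤ) - f₂ ⟨w₀, hT⟩ with hF
    have hFS : ∀ (x : W) (hx : x ∈ S), F x = (f₁ ⟨x, hx⟩ : ℤ) - f₁ ⟨w₀, hS⟩ := by
      intro x hx; simp [hF, hx]
    have hFT : ∀ (x : W) (hx : x ∈ T), F x = (f₂ ⟨x, hx⟩ : ℤ) - f₂ ⟨w₀, hT⟩ := by
      intro x hx
      by_cases hx' : x ∈ S
      · have hx0 : x = w₀ := hi x hx' hx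
        subst hx0
        simp [hF, hx']
      · simp only [hF, dif_neg hx']
    apply not_transGen_of_lt F
    rintro a b (⟨h1, h2, h⟩ | ⟨h1, h2, h⟩)
    · rw [hFS a h1, hFS b h2]
      have := hf₁ _ _ h
      omega
    · rw [hFT a h1, hFT b h2]
      have := hf₂ _ _ h
      omega
  · -- left inverse
    intro r
    apply Subtype.ext
    funext u w
    apply propext
    constructor
    · rintro (⟨h1, h2, h⟩ | ⟨h1, h2, h⟩) <;> exact h
    · intro h
      rcases hE u w (r.2.1 _ _ h) with ⟨h1, h2⟩ | ⟨h1, h2⟩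
      · exact Or.inl ⟨h1, h2, h⟩
      · exact Or.inr ⟨h1, h2, h⟩
  · -- right inverse
    intro p
    ext : 1
    · apply Subtype.ext
      funext a b
      apply propext
      constructor
      · rintro (⟨h1, h2, h⟩ | ⟨h1, h2, h⟩)
        · exact h
        · by_cases hab : (a : W) = b
          · have : a = b := Subtype.ext hab
            subst this
            exact absurd (p.2.2.1 _ _ h) (SimpleGraph.irrefl _)
          · exact absurd ((hi _ a.2 h1).trans (hi _ b.2 h2).symm) hab
      · intro h
        exact Or.inl ⟨a.2, b.2, h⟩
    · apply Subtype.ext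
      funext a b
      apply propext
      constructor
      · rintro (⟨h1, h2, h⟩ | ⟨h1, h2, h⟩)
        · by_cases hab : (a : W) = b
          · have : a = b := Subtype.ext hab
            subst this
            exact absurd (p.1.2.1 _ _ h) (SimpleGraph.irrefl _)
          · exact absurd ((hi _ h1 a.2).trans (hi _ h2 b.2).symm) hab
        · exact h
      · intro h
        exact Or.inr ⟨a.2, b.2, h⟩

end AocWedge
section GlueGraph

variable {W : Type} (S T : Set W) (w₀ : W)

/-- glue two graphs on subtypes to a graph on the whole type -/
def glueGraph (H₁ : SimpleGraph ↥S) (H₂ : SimpleGraph ↥T) : SimpleGraph W where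
  Adj := glueRel S T H₁.Adj H₂.Adj
  symm := by
    constructor
    rintro u w (⟨h1, h2, h⟩ | ⟨h1, h2, h⟩)
    · exact Or.inl ⟨h2, h1, h.symm⟩
    · exact Or.inr ⟨h2, h1, h.symm⟩
  loopless := by
    constructor
    rintro u (⟨h1, h2, h⟩ | ⟨h1, h2, h⟩)
    · exact SimpleGraph.irrefl _ h
    · exact SimpleGraph.irrefl _ h

variable {S T w₀} {H₁ : SimpleGraph ↥S} {H₂ : SimpleGraph ↥T}

lemma glueGraph_adj {u w : W} :
    (glueGraph S T H₁ H₂).Adj u w ↔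
      (∃ (hu : u ∈ S) (hw : w ∈ S), H₁.Adj ⟨u, hu⟩ ⟨w, hw⟩) ∨
      (∃ (hu : u ∈ T) (hw : w ∈ T), H₂.Adj ⟨u, hu⟩ ⟨w, hw⟩) := Iff.rfl

/-- inclusion homomorphism from a part into the glue -/
def glueHom₁ : H₁ →g glueGraph S T H₁ H₂ where
  toFun := Subtype.val
  map_rel' := fun {a b} h => Or.inl ⟨a.2, b.2, h⟩

def glueHom₂ : H₂ →g glueGraph S T H₁ H₂ where
  toFun := Subtype.val
  map_rel' := fun {a b} h => Or.inr ⟨a.2, b.2, h⟩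

variable (hi : ∀ x, x ∈ S → x ∈ T → x = w₀) (hS : w₀ ∈ S) (hT : w₀ ∈ T)
include hi hS hT

/-- walk decomposition in a glued graph -/
lemma glue_walk {u w : W} (p : (glueGraph S T H₁ H₂).Walk u w) :
    (∀ (hu : u ∈ S) (hw : w ∈ S), H₁.Reachable ⟨u, hu⟩ ⟨w, hw⟩) ∧
    (∀ (hu : u ∈ T) (hw : w ∈ T), H₂.Reachable ⟨u, hu⟩ ⟨w, hw⟩) ∧
    (∀ (hu : u ∈ S) (hw : w ∈ T),
      H₁.Reachable ⟨u, hu⟩ ⟨w₀, hS⟩ ∧ H₂.Reachable ⟨w₀, hT⟩ ⟨w, hw⟩) ∧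
    (∀ (hu : u ∈ T) (hw : w ∈ S),
      H₂.Reachable ⟨u, hu⟩ ⟨w₀, hT⟩ ∧ H₁.Reachable ⟨w₀, hS⟩ ⟨w, hw⟩) := by
  induction p with
  | @nil x =>
    refine ⟨fun hu hw => SimpleGraph.Reachable.refl _,
            fun hu hw => SimpleGraph.Reachable.refl _, ?_, ?_⟩
    · intro hu hw
      have hx : x = w₀ := hi x hu hw
      subst hx
      exact ⟨SimpleGraph.Reachable.refl _, SimpleGraph.Reachable.refl _⟩
    · intro hu hw
      have hx : x = w₀ := hi x hw hu
      subst hx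
      exact ⟨SimpleGraph.Reachable.refl _, SimpleGraph.Reachable.refl _⟩
  | @cons u x w h p ih =>
    rcases h with ⟨h1, h2, hadj⟩ | ⟨h1, h2, hadj⟩
    · -- edge within S
      refine ⟨?_, ?_, ?_, ?_⟩
      · intro hu hw
        exact (hadj.reachable).trans (ih.1 h2 hw)
      · intro hu hw
        have hu0 : u = w₀ := hi u h1 hu
        have h3 := (ih.2.2.1 h2 hw)
        refine SimpleGraph.Reachable.trans ?_ h3.2
        have : (⟨u, hu⟩ : ↥T) = ⟨w₀, hT⟩ := Subtype.ext hu0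
        rw [this]
      · intro hu hw
        obtain ⟨ha, hb⟩ := ih.2.2.1 h2 hw
        exact ⟨(hadj.reachable).trans ha, hb⟩
      · intro hu hw
        have hu0 : u = w₀ := hi u h1 hu
        have : (⟨u, hu⟩ : ↥T) = ⟨w₀, hT⟩ := Subtype.ext hu0
        rw [this]
        refine ⟨SimpleGraph.Reachable.refl _, ?_⟩
        have : (⟨u, h1⟩ : ↥S) = ⟨w₀, hS⟩ := Subtype.ext hu0
        rw [← this]
        exact (hadj.reachable).trans (ih.1 h2 hw)
    · -- edge within T
      refine ⟨?_, ?_, ?_, ?_⟩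
      · intro hu hw
        have hu0 : u = w₀ := hi u hu h1
        have h3 := ih.2.2.2 h2 hw
        refine SimpleGraph.Reachable.trans ?_ h3.2
        have : (⟨u, hu⟩ : ↥S) = ⟨w₀, hS⟩ := Subtype.ext hu0
        rw [this]
      · intro hu hw
        exact (hadj.reachable).trans (ih.2.1 h2 hw)
      · intro hu hw
        have hu0 : u = w₀ := hi u hu h1
        have : (⟨u, hu⟩ : ↥S) = ⟨w₀, hS⟩ := Subtype.ext hu0
        rw [this]
        refine ⟨SimpleGraph.Reachable.refl _, ?_⟩
        have : (⟨u, h1⟩ : ↥T) = ⟨w₀, hT⟩ := Subtype.ext hu0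
        rw [← this]
        exact (hadj.reachable).trans (ih.2.1 h2 hw)
      · intro hu hw
        obtain ⟨ha, hb⟩ := ih.2.2.2 h2 hw
        exact ⟨(hadj.reachable).trans ha, hb⟩

lemma glue_reach_S {u w : W} (h : (glueGraph S T H₁ H₂).Reachable u w)
    (hu : u ∈ S) (hw : w ∈ S) : H₁.Reachable ⟨u, hu⟩ ⟨w, hw⟩ := by
  obtain ⟨p⟩ := h
  exact (glue_walk hi hS hT p).1 hu hw

lemma glue_reach_T {u w : W} (h : (glueGraph S T H₁ H₂).Reachable u w)
    (hu : u ∈ T) (hw : w ∈ T) : H₂.Reachable ⟨u, hu⟩ ⟨w, hw⟩ := by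
  obtain ⟨p⟩ := h
  exact (glue_walk hi hS hT p).2.1 hu hw

lemma glue_reach_ST {u w : W} (h : (glueGraph S T H₁ H₂).Reachable u w)
    (hu : u ∈ S) (hw : w ∈ T) :
    H₁.Reachable ⟨u, hu⟩ ⟨w₀, hS⟩ ∧ H₂.Reachable ⟨w₀, hT⟩ ⟨w, hw⟩ := by
  obtain ⟨p⟩ := h
  exact (glue_walk hi hS hT p).2.2.1 hu hw

omit hi hS hT in
lemma glue_reach_of_S {a b : ↥S} (h : H₁.Reachable a b) :
    (glueGraph S T H₁ H₂).Reachable ↑a ↑b := h.map glueHom₁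

omit hi hS hT in
lemma glue_reach_of_T {a b : ↥T} (h : H₂.Reachable a b) :
    (glueGraph S T H₁ H₂).Reachable ↑a ↑b := h.map glueHom₂

end GlueGraph
section Components

variable {W : Type} {S T : Set W} {w₀ : W}
variable {H₁ : SimpleGraph ↥S} {H₂ : SimpleGraph ↥T}
variable (hi : ∀ x, x ∈ S → x ∈ T → x = w₀) (hS : w₀ ∈ S) (hT : w₀ ∈ T)

/-- the map on connected components induced by inclusion of the first part -/
noncomputable def cmap₁ : H₁.ConnectedComponent → (glueGraph S T H₁ H₂).ConnectedComponent :=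
  SimpleGraph.ConnectedComponent.map glueHom₁

noncomputable def cmap₂ : H₂.ConnectedComponent → (glueGraph S T H₁ H₂).ConnectedComponent :=
  SimpleGraph.ConnectedComponent.map glueHom₂

include hi hS hT

lemma cmap₁_injective : Function.Injective (cmap₁ (H₁ := H₁) (H₂ := H₂)) := by
  intro c d
  refine SimpleGraph.ConnectedComponent.ind₂ (fun a b h => ?_) c d
  simp only [cmap₁, SimpleGraph.ConnectedComponent.map_mk] at h
  have hr := SimpleGraph.ConnectedComponent.exact h
  have := glue_reach_S hi hS hT hr a.2 b.2
  exact SimpleGraph.ConnectedComponent.sound this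

lemma cmap₂_injective : Function.Injective (cmap₂ (H₁ := H₁) (H₂ := H₂)) := by
  intro c d
  refine SimpleGraph.ConnectedComponent.ind₂ (fun a b h => ?_) c d
  simp only [cmap₂, SimpleGraph.ConnectedComponent.map_mk] at h
  have hr := SimpleGraph.ConnectedComponent.exact h
  have := glue_reach_T hi hS hT hr a.2 b.2
  exact SimpleGraph.ConnectedComponent.sound this

lemma cmap₁_eq_cmap₂ (c : H₁.ConnectedComponent) (d : H₂.ConnectedComponent)
    (h : cmap₁ c = cmap₂ d) : c = H₁.connectedComponentMk ⟨w₀, hS⟩ := by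
  revert h
  refine SimpleGraph.ConnectedComponent.ind (fun a => ?_) c
  refine SimpleGraph.ConnectedComponent.ind (fun b => ?_) d
  intro h
  simp only [cmap₁, cmap₂, SimpleGraph.ConnectedComponent.map_mk] at h
  have hr := SimpleGraph.ConnectedComponent.exact h
  have := (glue_reach_ST hi hS hT hr a.2 b.2).1
  exact SimpleGraph.ConnectedComponent.sound this

variable (hu : ∀ x, x ∈ S ∨ x ∈ T)
include hu

lemma card_cc_glue [Finite W] :
    Nat.card (glueGraph S T H₁ H₂).ConnectedComponent + 1 =
      Nat.card H₁.ConnectedComponent + Nat.card H₂.ConnectedComponent := by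
  classical
  set x₁ : H₁.ConnectedComponent := H₁.connectedComponentMk ⟨w₀, hS⟩ with hx₁
  set g : {c : H₁.ConnectedComponent // ¬ c = x₁} ⊕ H₂.ConnectedComponent →
      (glueGraph S T H₁ H₂).ConnectedComponent :=
    fun z => Sum.elim (fun c : {c : H₁.ConnectedComponent // ¬ c = x₁} => cmap₁ (c : H₁.ConnectedComponent)) (fun c => cmap₂ c) z with hg
  have hginj : Function.Injective g := by
    rintro (⟨c, hc⟩ | c) (⟨d, hd⟩ | d) h <;> simp only [hg, Sum.elim_inl, Sum.elim_inr] at h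
    · exact congrArg _ (Subtype.ext (cmap₁_injective hi hS hT h))
    · exact absurd (cmap₁_eq_cmap₂ hi hS hT _ _ h) hc
    · exact absurd (cmap₁_eq_cmap₂ hi hS hT _ _ h.symm) hd
    · exact congrArg _ (cmap₂_injective hi hS hT h)
  have hgsurj : Function.Surjective g := by
    intro C
    refine SimpleGraph.ConnectedComponent.ind (fun z => ?_) C
    rcases hu z with hz | hz
    · by_cases hzc : H₁.connectedComponentMk ⟨z, hz⟩ = x₁
      · refine ⟨Sum.inr (H₂.connectedComponentMk ⟨w₀, hT⟩), ?_⟩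
        simp only [hg, Sum.elim_inr, cmap₂, SimpleGraph.ConnectedComponent.map_mk]
        apply SimpleGraph.ConnectedComponent.sound
        have hr := SimpleGraph.ConnectedComponent.exact hzc
        exact ((glue_reach_of_S hr).symm : _)
      · exact ⟨Sum.inl ⟨_, hzc⟩, by
          simp only [hg, Sum.elim_inl, cmap₁, SimpleGraph.ConnectedComponent.map_mk]
          rfl⟩
    · exact ⟨Sum.inr (H₂.connectedComponentMk ⟨z, hz⟩), by
        simp only [hg, Sum.elim_inr, cmap₂, SimpleGraph.ConnectedComponent.map_mk]
        rfl⟩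
  have hcardg := Nat.card_congr (Equiv.ofBijective g ⟨hginj, hgsurj⟩)
  rw [Nat.card_sum] at hcardg
  have hsplit : Nat.card {c : H₁.ConnectedComponent // c = x₁} +
      Nat.card {c : H₁.ConnectedComponent // ¬ c = x₁} = Nat.card H₁.ConnectedComponent :=
    by rw [← Nat.card_sum]; exact Nat.card_congr (Equiv.sumCompl _)
  have hone : Nat.card {c : H₁.ConnectedComponent // c = x₁} = 1 := by
    haveI : Unique {c : H₁.ConnectedComponent // c = x₁} :=
      ⟨⟨⟨x₁, rfl⟩⟩, fun y => Subtype.ext y.2⟩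
    exact Nat.card_unique
  omega

end Components
section Flats

variable {W : Type} {S T : Set W} {w₀ : W}
variable {Γ : SimpleGraph W} {H₁ : SimpleGraph ↥S} {H₂ : SimpleGraph ↥T}
variable (hi : ∀ x, x ∈ S → x ∈ T → x = w₀) (hS : w₀ ∈ S) (hT : w₀ ∈ T)
variable (hE : ∀ u w, Γ.Adj u w → (u ∈ S ∧ w ∈ S) ∨ (u ∈ T ∧ w ∈ T))

omit hi hS hT hE in
lemma glue_restrict (H : SimpleGraph W)
    (hH : ∀ u w, H.Adj u w → (u ∈ S ∧ w ∈ S) ∨ (u ∈ T ∧ w ∈ T)) :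
    glueGraph S T (H.induce S) (H.induce T) = H := by
  ext u w
  constructor
  · rintro (⟨h1, h2, h⟩ | ⟨h1, h2, h⟩) <;> exact h
  · intro h
    rcases hH u w h with ⟨h1, h2⟩ | ⟨h1, h2⟩
    · exact Or.inl ⟨h1, h2, h⟩
    · exact Or.inr ⟨h1, h2, h⟩

include hi in
omit hS hT hE in
lemma glue_induce_S : (glueGraph S T H₁ H₂).induce S = H₁ := by
  ext a b
  constructor
  · rintro (⟨h1, h2, h⟩ | ⟨h1, h2, h⟩)
    · exact h
    · by_cases hab : (a : W) = b
      · have : a = b := Subtype.ext hab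
        subst this
        exact absurd h (SimpleGraph.irrefl _)
      · exact absurd ((hi _ a.2 h1).trans (hi _ b.2 h2).symm) hab
  · intro h
    exact Or.inl ⟨a.2, b.2, h⟩

include hi in
omit hS hT hE in
lemma glue_induce_T : (glueGraph S T H₁ H₂).induce T = H₂ := by
  ext a b
  constructor
  · rintro (⟨h1, h2, h⟩ | ⟨h1, h2, h⟩)
    · by_cases hab : (a : W) = b
      · have : a = b := Subtype.ext hab
        subst this
        exact absurd h (SimpleGraph.irrefl _)
      · exact absurd ((hi _ h1 a.2).trans (hi _ h2 b.2).symm) hab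
    · exact h
  · intro h
    exact Or.inr ⟨a.2, b.2, h⟩

include hi hS hT hE in
lemma isFlat_glue_iff :
    IsFlatOf Γ (glueGraph S T H₁ H₂) ↔
      IsFlatOf (Γ.induce S) H₁ ∧ IsFlatOf (Γ.induce T) H₂ := by
  constructor
  · rintro ⟨hle, hflat⟩
    refine ⟨⟨?_, ?_⟩, ⟨?_, ?_⟩⟩
    · intro a b h
      exact hle (Or.inl ⟨a.2, b.2, h⟩)
    · intro a b hadj hreach
      have h' := hflat ↑a ↑b hadj (glue_reach_of_S hreach)
      rcases h' with ⟨h1, h2, h⟩ | ⟨h1, h2, h⟩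
      · exact h
      · exact absurd (Subtype.ext ((hi _ a.2 h1).trans (hi _ b.2 h2).symm) : a = b)
          (fun hab => ((Γ.induce S).ne_of_adj hadj) hab)
    · intro a b h
      exact hle (Or.inr ⟨a.2, b.2, h⟩)
    · intro a b hadj hreach
      have h' := hflat ↑a ↑b hadj (glue_reach_of_T hreach)
      rcases h' with ⟨h1, h2, h⟩ | ⟨h1, h2, h⟩
      · exact absurd (Subtype.ext ((hi _ h1 a.2).trans (hi _ h2 b.2).symm) : a = b)
          (fun hab => ((Γ.induce T).ne_of_adj hadj) hab)
      · exact h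
  · rintro ⟨⟨hle₁, hflat₁⟩, ⟨hle₂, hflat₂⟩⟩
    constructor
    · rintro u w (⟨h1, h2, h⟩ | ⟨h1, h2, h⟩)
      · exact hle₁ h
      · exact hle₂ h
    · intro u w hadj hreach
      rcases hE u w hadj with ⟨h1, h2⟩ | ⟨h1, h2⟩
      · exact Or.inl ⟨h1, h2, hflat₁ _ _ hadj (glue_reach_S hi hS hT hreach h1 h2)⟩
      · exact Or.inr ⟨h1, h2, hflat₂ _ _ hadj (glue_reach_T hi hS hT hreach h1 h2)⟩

end Flats

section AocIso

lemma aoc_congr {α β : Type} (Γ : SimpleGraph α) (Γ' : SimpleGraph β) (e : Γ ≃g Γ') :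
    acyclicOrientationCount Γ = acyclicOrientationCount Γ' := by
  rw [acyclicOrientationCount, acyclicOrientationCount]
  apply Nat.card_congr
  refine
    { toFun := fun r => ⟨fun x y => r.1 (e.symm x) (e.symm y), ?_, ?_, ?_⟩
      invFun := fun s => ⟨fun x y => s.1 (e x) (e y), ?_, ?_, ?_⟩
      left_inv := ?_
      right_inv := ?_ }
  · intro u v h
    have := r.2.1 _ _ h
    have h2 := e.map_adj_iff (v := e.symm u) (w := e.symm v)
    rw [e.apply_symm_apply, e.apply_symm_apply] at h2
    exact h2.mpr this
  · intro u v hadj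
    apply r.2.2.1
    have h2 := e.map_adj_iff (v := e.symm u) (w := e.symm v)
    rw [e.apply_symm_apply, e.apply_symm_apply] at h2
    exact h2.mp hadj
  · intro a hc
    exact r.2.2.2 (e.symm a) (transGen_map e.symm _ _ (fun _ _ h => h) hc)
  · intro u v h
    have := s.2.1 _ _ h
    exact (e.map_adj_iff (v := u) (w := v)).mp this
  · intro u v hadj
    apply s.2.2.1
    exact (e.map_adj_iff (v := u) (w := v)).mpr hadj
  · intro a hc
    exact s.2.2.2 (e a) (transGen_map e _ _ (fun _ _ h => h) hc)
  · intro r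
    apply Subtype.ext
    funext x y
    simp only [e.symm_apply_apply]
  · intro s
    apply Subtype.ext
    funext x y
    simp only [e.apply_symm_apply]

end AocIso
section ContractIso

variable {W : Type} {S T : Set W} {w₀ : W}
variable {Γ : SimpleGraph W} {H₁ : SimpleGraph ↥S} {H₂ : SimpleGraph ↥T}
variable (hi : ∀ x, x ∈ S → x ∈ T → x = w₀) (hS : w₀ ∈ S) (hT : w₀ ∈ T)

include hi hS hT

/-- if a vertex of `S` maps into the component `cmap₁ c`, its `H₁`-component is `c`. -/
lemma mk_eq_cmap₁ {u : W} (hu : u ∈ S) (c : H₁.ConnectedComponent)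
    (h : (glueGraph S T H₁ H₂).connectedComponentMk u = cmap₁ c) :
    H₁.connectedComponentMk ⟨u, hu⟩ = c := by
  revert h
  refine SimpleGraph.ConnectedComponent.ind (fun a => ?_) c
  intro h
  simp only [cmap₁, SimpleGraph.ConnectedComponent.map_mk] at h
  have hr := SimpleGraph.ConnectedComponent.exact h
  exact SimpleGraph.ConnectedComponent.sound (glue_reach_S hi hS hT hr hu a.2)

lemma mk_eq_cmap₂ {u : W} (hu : u ∈ T) (c : H₂.ConnectedComponent)
    (h : (glueGraph S T H₁ H₂).connectedComponentMk u = cmap₂ c) :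
    H₂.connectedComponentMk ⟨u, hu⟩ = c := by
  revert h
  refine SimpleGraph.ConnectedComponent.ind (fun a => ?_) c
  intro h
  simp only [cmap₂, SimpleGraph.ConnectedComponent.map_mk] at h
  have hr := SimpleGraph.ConnectedComponent.exact h
  exact SimpleGraph.ConnectedComponent.sound (glue_reach_T hi hS hT hr hu a.2)

/-- if a vertex of `T` maps into the component `cmap₁ c`, then `c` is the component of `w₀`. -/
lemma cmap₁_eq_of_T {u : W} (hu : u ∈ T) (c : H₁.ConnectedComponent)
    (h : (glueGraph S T H₁ H₂).connectedComponentMk u = cmap₁ c) :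
    c = H₁.connectedComponentMk ⟨w₀, hS⟩ := by
  revert h
  refine SimpleGraph.ConnectedComponent.ind (fun a => ?_) c
  intro h
  simp only [cmap₁, SimpleGraph.ConnectedComponent.map_mk] at h
  have hr := SimpleGraph.ConnectedComponent.exact h.symm
  exact SimpleGraph.ConnectedComponent.sound (glue_reach_ST hi hS hT hr a.2 hu).1

lemma cmap₂_eq_of_S {u : W} (hu : u ∈ S) (c : H₂.ConnectedComponent)
    (h : (glueGraph S T H₁ H₂).connectedComponentMk u = cmap₂ c) :
    c = H₂.connectedComponentMk ⟨w₀, hT⟩ := by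
  revert h
  refine SimpleGraph.ConnectedComponent.ind (fun a => ?_) c
  intro h
  simp only [cmap₂, SimpleGraph.ConnectedComponent.map_mk] at h
  have hr := SimpleGraph.ConnectedComponent.exact h.symm
  obtain ⟨p⟩ := hr
  exact SimpleGraph.ConnectedComponent.sound ((glue_walk hi hS hT p).2.2.2 a.2 hu).1

variable (hE : ∀ u w, Γ.Adj u w → (u ∈ S ∧ w ∈ S) ∨ (u ∈ T ∧ w ∈ T))
include hE

/-- the contraction of a glued graph restricted to the `S`-side components -/
noncomputable def contractIso₁ :
    contractFlat (Γ.induce S) H₁ ≃g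
      (contractFlat Γ (glueGraph S T H₁ H₂)).induce
        (Set.range (cmap₁ (H₁ := H₁) (H₂ := H₂))) where
  toEquiv := Equiv.ofInjective _ (cmap₁_injective hi hS hT)
  map_rel_iff' := by
    intro c d
    simp only [Equiv.ofInjective_apply]
    constructor
    · rintro ⟨hne, u, w, hadj, hcu, hcw⟩
      have hne' : c ≠ d := fun h => hne (by rw [h])
      rcases hE u w hadj with ⟨h1, h2⟩ | ⟨h1, h2⟩
      · exact ⟨hne', ⟨u, h1⟩, ⟨w, h2⟩, hadj, mk_eq_cmap₁ hi hS hT h1 c hcu,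
          mk_eq_cmap₁ hi hS hT h2 d hcw⟩
      · exact absurd ((cmap₁_eq_of_T hi hS hT h1 c hcu).trans
          (cmap₁_eq_of_T hi hS hT h2 d hcw).symm) hne'
    · rintro ⟨hne, a, b, hadj, hca, hcb⟩
      refine ⟨fun h => hne (cmap₁_injective hi hS hT h), ↑a, ↑b, hadj,
        ?_, ?_⟩
      · rw [← hca]; rfl
      · rw [← hcb]; rfl

noncomputable def contractIso₂ :
    contractFlat (Γ.induce T) H₂ ≃g
      (contractFlat Γ (glueGraph S T H₁ H₂)).induce
        (Set.range (cmap₂ (H₁ := H₁) (H₂ := H₂))) where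
  toEquiv := Equiv.ofInjective _ (cmap₂_injective hi hS hT)
  map_rel_iff' := by
    intro c d
    simp only [Equiv.ofInjective_apply]
    constructor
    · rintro ⟨hne, u, w, hadj, hcu, hcw⟩
      have hne' : c ≠ d := fun h => hne (by rw [h])
      rcases hE u w hadj with ⟨h1, h2⟩ | ⟨h1, h2⟩
      · exact absurd ((cmap₂_eq_of_S hi hS hT h1 c hcu).trans
          (cmap₂_eq_of_S hi hS hT h2 d hcw).symm) hne'
      · exact ⟨hne', ⟨u, h1⟩, ⟨w, h2⟩, hadj, mk_eq_cmap₂ hi hS hT h1 c hcu,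
          mk_eq_cmap₂ hi hS hT h2 d hcw⟩
    · rintro ⟨hne, a, b, hadj, hca, hcb⟩
      refine ⟨fun h => hne (cmap₂_injective hi hS hT h), ↑a, ↑b, hadj,
        ?_, ?_⟩
      · rw [← hca]; rfl
      · rw [← hcb]; rfl

variable (hu : ∀ x, x ∈ S ∨ x ∈ T)
include hu

lemma aoc_contract_glue [Finite W] :
    acyclicOrientationCount (contractFlat Γ (glueGraph S T H₁ H₂)) =
      acyclicOrientationCount (contractFlat (Γ.induce S) H₁) *
        acyclicOrientationCount (contractFlat (Γ.induce T) H₂) := by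
  set K := contractFlat Γ (glueGraph S T H₁ H₂)
  have h1 := aoc_congr _ _ (contractIso₁ (Γ := Γ) (H₁ := H₁) (H₂ := H₂) hi hS hT hE)
  have h2 := aoc_congr _ _ (contractIso₂ (Γ := Γ) (H₁ := H₁) (H₂ := H₂) hi hS hT hE)
  rw [h1, h2]
  apply aoc_wedge (w₀ := (glueGraph S T H₁ H₂).connectedComponentMk w₀) K
  · -- covering
    intro C
    refine SimpleGraph.ConnectedComponent.ind (fun z => ?_) C
    rcases hu z with hz | hz
    · exact Or.inl ⟨H₁.connectedComponentMk ⟨z, hz⟩, rfl⟩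
    · exact Or.inr ⟨H₂.connectedComponentMk ⟨z, hz⟩, rfl⟩
  · -- intersection
    rintro C ⟨c, hc⟩ ⟨d, hd⟩
    have := cmap₁_eq_cmap₂ hi hS hT c d (hc.trans hd.symm)
    rw [← hc, this]
    rfl
  · exact ⟨H₁.connectedComponentMk ⟨w₀, hS⟩, rfl⟩
  · exact ⟨H₂.connectedComponentMk ⟨w₀, hT⟩, rfl⟩
  · -- edges of contraction lie within a side
    rintro C D ⟨hne, u, w, hadj, hcu, hcw⟩
    rcases hE u w hadj with ⟨h1, h2⟩ | ⟨h1, h2⟩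
    · exact Or.inl ⟨⟨H₁.connectedComponentMk ⟨u, h1⟩, hcu ▸ rfl⟩,
        ⟨H₁.connectedComponentMk ⟨w, h2⟩, hcw ▸ rfl⟩⟩
    · exact Or.inr ⟨⟨H₂.connectedComponentMk ⟨u, h1⟩, hcu ▸ rfl⟩,
        ⟨H₂.connectedComponentMk ⟨w, h2⟩, hcw ▸ rfl⟩⟩

end ContractIso
section Rank

lemma flatRank_glue {W : Type} [Fintype W] {S T : Set W} [Fintype ↥S] [Fintype ↥T] {w₀ : W}
    (hi : ∀ x, x ∈ S → x ∈ T → x = w₀) (hS : w₀ ∈ S) (hT : w₀ ∈ T)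
    (hu : ∀ x, x ∈ S ∨ x ∈ T)
    (H₁ : SimpleGraph ↥S) (H₂ : SimpleGraph ↥T) :
    flatRank (glueGraph S T H₁ H₂) = flatRank H₁ + flatRank H₂ := by
  have hcc := card_cc_glue (H₁ := H₁) (H₂ := H₂) hi hS hT hu
  have hc1 : Nat.card H₁.ConnectedComponent ≤ Nat.card ↥S :=
    Nat.card_le_card_of_surjective _ (fun c => Quot.exists_rep c)
  have hc2 : Nat.card H₂.ConnectedComponent ≤ Nat.card ↥T :=
    Nat.card_le_card_of_surjective _ (fun c => Quot.exists_rep c)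
  haveI : Nonempty H₁.ConnectedComponent := ⟨H₁.connectedComponentMk ⟨w₀, hS⟩⟩
  haveI : Nonempty H₂.ConnectedComponent := ⟨H₂.connectedComponentMk ⟨w₀, hT⟩⟩
  have hp1 : 0 < Nat.card H₁.ConnectedComponent := Nat.card_pos
  have hp2 : 0 < Nat.card H₂.ConnectedComponent := Nat.card_pos
  have hUset : S ∪ T = Set.univ := by
    ext x
    simpa using hu x
  have hIset : S ∩ T = {w₀} := by
    ext x
    simp only [Set.mem_inter_iff, Set.mem_singleton_iff]
    exact ⟨fun ⟨h1, h2⟩ => hi x h1 h2, fun h => h ▸ ⟨hS, hT⟩⟩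
  have hcardST : S.ncard + T.ncard = Fintype.card W + 1 := by
    have := Set.ncard_union_add_ncard_inter S T (Set.toFinite _) (Set.toFinite _)
    rw [hUset, hIset, Set.ncard_univ, Set.ncard_singleton, Nat.card_eq_fintype_card] at this
    omega
  have hS1 : Nat.card ↥S = S.ncard := Nat.card_coe_set_eq S
  have hT1 : Nat.card ↥T = T.ncard := Nat.card_coe_set_eq T
  rw [flatRank, flatRank, flatRank]
  rw [Fintype.card_congr (Equiv.refl ↥S)]
  have e1 : Fintype.card ↥S = Nat.card ↥S := (Nat.card_eq_fintype_card).symm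
  have e2 : Fintype.card ↥T = Nat.card ↥T := (Nat.card_eq_fintype_card).symm
  omega

end Rank
/-- `∑_{F flat of Γ} a(Γ/F) q^{rk F}` is multiplicative under wedges of graphs. -/
theorem flatSum_wedge
    {V : Type} [Fintype V] [DecidableEq V] (G : SimpleGraph V) (v : V)
    (A B : Finset V) (hU : A ∪ B = Finset.univ) (hI : A ∩ B = {v})
    (hE : ∀ u w, G.Adj u w → (u ∈ A ∧ w ∈ A) ∨ (u ∈ B ∧ w ∈ B)) :
    (∑ᶠ H ∈ {H : SimpleGraph V | IsFlatOf G H},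
        (acyclicOrientationCount (contractFlat G H) : Polynomial ℤ) * X ^ flatRank H)
      = (∑ᶠ H₁ ∈ {H₁ : SimpleGraph (A : Set V) | IsFlatOf (G.induce (A : Set V)) H₁},
            (acyclicOrientationCount (contractFlat (G.induce (A : Set V)) H₁) : Polynomial ℤ)
              * X ^ flatRank H₁) *
        (∑ᶠ H₂ ∈ {H₂ : SimpleGraph (B : Set V) | IsFlatOf (G.induce (B : Set V)) H₂},
            (acyclicOrientationCount (contractFlat (G.induce (B : Set V)) H₂) : Polynomial ℤ)
              * X ^ flatRank H₂) := by
  classical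
  have hvAB : v ∈ A ∩ B := by rw [hI]; exact Finset.mem_singleton_self v
  have hvA : v ∈ (A : Set V) := Finset.mem_coe.mpr (Finset.mem_inter.mp hvAB).1
  have hvB : v ∈ (B : Set V) := Finset.mem_coe.mpr (Finset.mem_inter.mp hvAB).2
  have hi' : ∀ x : V, x ∈ (A : Set V) → x ∈ (B : Set V) → x = v := by
    intro x h1 h2
    have : x ∈ A ∩ B := Finset.mem_inter.mpr ⟨Finset.mem_coe.mp h1, Finset.mem_coe.mp h2⟩
    rw [hI] at this
    exact Finset.mem_singleton.mp this
  have hu' : ∀ x : V, x ∈ (A : Set V) ∨ x ∈ (B : Set V) := by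
    intro x
    have : x ∈ A ∪ B := by rw [hU]; exact Finset.mem_univ x
    exact (Finset.mem_union.mp this).imp Finset.mem_coe.mpr Finset.mem_coe.mpr
  have hE' : ∀ u w : V, G.Adj u w →
      (u ∈ (A : Set V) ∧ w ∈ (A : Set V)) ∨ (u ∈ (B : Set V) ∧ w ∈ (B : Set V)) := by
    intro u w h
    exact (hE u w h).imp
      (fun h => ⟨Finset.mem_coe.mpr h.1, Finset.mem_coe.mpr h.2⟩)
      (fun h => ⟨Finset.mem_coe.mpr h.1, Finset.mem_coe.mpr h.2⟩)
  haveI : Fintype ↥{H : SimpleGraph V | IsFlatOf G H} := Fintype.ofFinite _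
  haveI : Fintype ↥{H₁ : SimpleGraph ↥(A : Set V) | IsFlatOf (G.induce (A : Set V)) H₁} :=
    Fintype.ofFinite _
  haveI : Fintype ↥{H₂ : SimpleGraph ↥(B : Set V) | IsFlatOf (G.induce (B : Set V)) H₂} :=
    Fintype.ofFinite _
  rw [finsum_mem_eq_toFinset_sum, finsum_mem_eq_toFinset_sum, finsum_mem_eq_toFinset_sum,
    Finset.sum_mul_sum, ← Finset.sum_product']
  refine Finset.sum_nbij'
    (fun H => (H.induce (A : Set V), H.induce (B : Set V)))
    (fun p => glueGraph (A : Set V) (B : Set V) p.1 p.2)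
    ?_ ?_ ?_ ?_ ?_
  · intro H hH
    rw [Set.mem_toFinset] at hH
    have hglue : glueGraph (A : Set V) (B : Set V) (H.induce (A : Set V))
        (H.induce (B : Set V)) = H :=
      glue_restrict H (fun u w h => hE' u w (hH.1 h))
    have := (isFlat_glue_iff hi' hvA hvB hE').mp (by rw [hglue]; exact hH)
    rw [Finset.mem_product, Set.mem_toFinset, Set.mem_toFinset]
    exact this
  · intro p hp
    rw [Finset.mem_product, Set.mem_toFinset, Set.mem_toFinset] at hp
    rw [Set.mem_toFinset]
    exact (isFlat_glue_iff hi' hvA hvB hE').mpr hp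
  · intro H hH
    rw [Set.mem_toFinset] at hH
    exact glue_restrict H (fun u w h => hE' u w (hH.1 h))
  · intro p hp
    exact Prod.ext (glue_induce_S hi') (glue_induce_T hi')
  · intro H hH
    rw [Set.mem_toFinset] at hH
    have hglue : glueGraph (A : Set V) (B : Set V) (H.induce (A : Set V))
        (H.induce (B : Set V)) = H :=
      glue_restrict H (fun u w h => hE' u w (hH.1 h))
    conv_lhs => rw [← hglue]
    rw [aoc_contract_glue hi' hvA hvB hE' hu',
      flatRank_glue hi' hvA hvB hu' (H.induce (A : Set V)) (H.induce (B : Set V))]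
    push_cast
    ring
end
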